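/- Let G be a finite nonabelian group with nontrivial center Z(G). Then D(G) - D(Z(G)) ≥ 3. -/

import Mathlib

open Pointwise

/-- Two subgroups of `G` are conjugate. -/
def SubgroupConj {G : Type*} [Group G] (H K : Subgroup G) : Prop :=
  ∃ g : G, K = H.map (MulAut.conj g).toMonoidHom

/-- `D(G)`: the number of conjugacy classes of nontrivial subgroups of `G`
that are not self-normalizing. -/
noncomputable def DCount (G : Type*) [Group G] : ℕ :=
  Nat.card (Quot fun (H K : {H : Subgroup G // H ≠ ⊥ ∧ Subgroup.normalizer (H : Set G) ≠ H}) =>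
    SubgroupConj H.1 K.1)

/-- `D_G(N)`: the number of `G`-conjugacy classes of nontrivial, non self-normalizing
subgroups of `G` that are properly contained in `N`. -/
noncomputable def DCountIn (G : Type*) [Group G] (N : Subgroup G) : ℕ :=
  Nat.card (Quot fun (H K : {H : Subgroup G // H ≠ ⊥ ∧ Subgroup.normalizer (H : Set G) ≠ H ∧ H < N}) =>
    SubgroupConj H.1 K.1)

/-- `G` is a Frobenius group with kernel `N` and complement `H`. -/
def IsFrobeniusWith {G : Type*} [Group G] (N H : Subgroup G) : Prop :=
  H ≠ ⊥ ∧ H ≠ ⊤ ∧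
    (∀ g : G, g ∉ H → H ⊓ H.map (MulAut.conj g).toMonoidHom = ⊥) ∧
    (∀ x : G, x ∈ N ↔ ∀ g : G, g * x * g⁻¹ ∈ H → x = 1)

/-- A subgroup is elementary abelian for the prime `p`. -/
def IsElementaryAbelianSubgroup {G : Type*} [Group G] (p : ℕ) (N : Subgroup G) : Prop :=
  (∀ x ∈ N, x ^ p = 1) ∧ ∀ x ∈ N, ∀ y ∈ N, x * y = y * x

/-- The derived length of a group: the least `n` with `derivedSeries G n = ⊥`. -/
noncomputable def derivedLength (G : Type*) [Group G] : ℕ :=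
  sInf {n | derivedSeries G n = ⊥}

/-- The nilpotency class of a group: the least `n` with `lowerCentralSeries G n = ⊥`. -/
noncomputable def nilClass (G : Type*) [Group G] : ℕ :=
  sInf {n | (⊤ : Subgroup G).lowerCentralSeries n = ⊥}

namespace Stmt12Aux
variable {G : Type*} [Group G]

lemma map_conj_eq_of_normal (H : Subgroup G) (hH : H.Normal) (g : G) :
    H.map (MulAut.conj g).toMonoidHom = H := by
  ext x
  simp only [Subgroup.mem_map, MulEquiv.coe_toMonoidHom, MulAut.conj_apply]
  constructor
  · rintro ⟨y, hy, rfl⟩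
    exact hH.conj_mem y hy g
  · intro hx
    refine ⟨g⁻¹ * x * g, ?_, by group⟩
    simpa using hH.conj_mem x hx g⁻¹

lemma subgroupConj_equiv : Equivalence (SubgroupConj (G := G)) := by
  constructor
  · intro H
    refine ⟨1, ?_⟩
    have : (MulAut.conj (1 : G)).toMonoidHom = MonoidHom.id G := by
      ext x; simp
    rw [this, Subgroup.map_id]
  · rintro H K ⟨g, rfl⟩
    refine ⟨g⁻¹, ?_⟩
    rw [Subgroup.map_map]
    have : ((MulAut.conj g⁻¹).toMonoidHom.comp (MulAut.conj g).toMonoidHom)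
        = MonoidHom.id G := by
      ext x; simp; group
    rw [this, Subgroup.map_id]
  · rintro H K L ⟨g, rfl⟩ ⟨h, rfl⟩
    refine ⟨h * g, ?_⟩
    rw [Subgroup.map_map]
    congr 1
    ext x; simp [mul_assoc]

lemma conj_eq_self_of_normal {H K : Subgroup G} (hH : H.Normal)
    (h : SubgroupConj H K) : K = H := by
  obtain ⟨g, rfl⟩ := h
  exact map_conj_eq_of_normal H hH g

lemma le_of_conj_of_le {Z H K : Subgroup G} (hZ : Z.Normal) (hle : Z ≤ H)
    (h : SubgroupConj H K) : Z ≤ K := by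
  obtain ⟨g, rfl⟩ := h
  calc Z = Z.map (MulAut.conj g).toMonoidHom := (map_conj_eq_of_normal Z hZ g).symm
    _ ≤ H.map (MulAut.conj g).toMonoidHom := Subgroup.map_mono hle

lemma normal_of_le_center {K : Subgroup G} (h : K ≤ Subgroup.center G) : K.Normal := by
  constructor
  intro k hk g
  have hc : g * k = k * g := (Subgroup.mem_center_iff.mp (h hk) g)
  have : g * k * g⁻¹ = k := by rw [hc]; simp [mul_assoc]
  rwa [this]

lemma finish [Finite G] (hZb : Subgroup.center G ≠ ⊥) (hZt : Subgroup.center G ≠ ⊤)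
    (S₂ S₃ : Subgroup G)
    (h2b : S₂ ≠ ⊥) (h2n : Subgroup.normalizer (S₂ : Set G) ≠ S₂)
    (h3b : S₃ ≠ ⊥) (h3n : Subgroup.normalizer (S₃ : Set G) ≠ S₃)
    (h2Z : Subgroup.center G < S₂)
    (h3 : (Subgroup.center G < S₃ ∧ ¬ SubgroupConj S₂ S₃)
        ∨ (¬ S₃ ≤ Subgroup.center G ∧ ¬ Subgroup.center G ≤ S₃)) :
    DCount ↥(Subgroup.center G) + 3 ≤ DCount G := by
  set Z := Subgroup.center G with hZdef
  have hZn : Z.Normal := inferInstance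
  -- the conjugation relations
  set TZ := {H : Subgroup ↥Z // H ≠ ⊥ ∧ Subgroup.normalizer (H : Set ↥Z) ≠ H} with hTZ
  set TG := {H : Subgroup G // H ≠ ⊥ ∧ Subgroup.normalizer (H : Set G) ≠ H} with hTG
  set rZ : TZ → TZ → Prop := fun H K => SubgroupConj H.1 K.1 with hrZ
  set rG : TG → TG → Prop := fun H K => SubgroupConj H.1 K.1 with hrG
  have equivG : Equivalence rG :=
    ⟨fun a => subgroupConj_equiv.refl a.1, fun h => subgroupConj_equiv.symm h,
      fun h h' => subgroupConj_equiv.trans h h'⟩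
  have mk_iff : ∀ a b : TG, Quot.mk rG a = Quot.mk rG b ↔ SubgroupConj a.1 b.1 := by
    intro a b
    constructor
    · intro h
      exact equivG.eqvGen_iff.mp (Quot.eq.mp h)
    · intro h
      exact Quot.sound h
  -- facts about subgroups of the center
  have hTZtop : ∀ H : TZ, H.1 ≠ ⊤ := by
    intro H h
    exact H.2.2 (by rw [h, Subgroup.normalizer_eq_top_iff.mpr (by infer_instance)])
  have hmapinj : Function.Injective (Subgroup.map Z.subtype) :=
    Subgroup.map_injective Z.subtype_injective
  have hmaptop : (⊤ : Subgroup ↥Z).map Z.subtype = Z := by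
    rw [← MonoidHom.range_eq_map]
    exact Subgroup.range_subtype Z
  have hφlt : ∀ H : TZ, (H.1.map Z.subtype) < Z := by
    intro H
    refine lt_of_le_of_ne (Subgroup.map_subtype_le _) (fun h => ?_)
    exact hTZtop H (hmapinj (by rw [h, hmaptop]))
  have hφnormal : ∀ H : TZ, (H.1.map Z.subtype).Normal := fun H =>
    normal_of_le_center (Subgroup.map_subtype_le _)
  have hφbot : ∀ H : TZ, (H.1.map Z.subtype) ≠ ⊥ := by
    intro H h
    refine H.2.1 ?_
    have := (Subgroup.map_eq_bot_iff _).mp h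
    rwa [Subgroup.ker_subtype, le_bot_iff] at this
  set φ : TZ → TG := fun H => ⟨H.1.map Z.subtype, hφbot H, by
    rw [Subgroup.normalizer_eq_top_iff.mpr (hφnormal H)]
    intro h
    exact hZt (top_le_iff.mp (h.le.trans (Subgroup.map_subtype_le _)))⟩ with hφ
  -- lift to quotients
  have hsound : ∀ H K : TZ, rZ H K → Quot.mk rG (φ H) = Quot.mk rG (φ K) := by
    intro H K h
    have : K.1 = H.1 := conj_eq_self_of_normal inferInstance h
    have hHK : H = K := Subtype.ext this.symm
    rw [hHK]
  set fZ : Quot rZ → Quot rG := Quot.lift (fun H => Quot.mk rG (φ H)) hsound with hfZ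
  have hZne2 : Subgroup.normalizer (Z : Set G) ≠ Z := by
    rw [Subgroup.normalizer_eq_top_iff.mpr hZn]
    exact hZt.symm
  set t : Fin 3 → TG := ![⟨Z, hZb, hZne2⟩, ⟨S₂, h2b, h2n⟩, ⟨S₃, h3b, h3n⟩] with ht
  set F : Quot rZ ⊕ Fin 3 → Quot rG :=
    Sum.elim fZ (fun i => Quot.mk rG (t i)) with hF
  -- non-conjugacy facts
  have hconjφt : ∀ (H : TZ) (i : Fin 3), ¬ SubgroupConj (φ H).1 (t i).1 := by
    intro H i hc
    have heq : (t i).1 = (φ H).1 := conj_eq_self_of_normal (hφnormal H) hc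
    have hle : (t i).1 < Z := heq ▸ hφlt H
    fin_cases i
    · exact absurd hle (lt_irrefl Z)
    · exact absurd (h2Z.trans hle) (lt_irrefl Z)
    · rcases h3 with ⟨h3', _⟩ | ⟨h3', _⟩
      · exact absurd (h3'.trans hle) (lt_irrefl Z)
      · exact h3' hle.le
  have hconjtt : ∀ i j : Fin 3, SubgroupConj (t i).1 (t j).1 → i = j := by
    have c01 : ¬ SubgroupConj Z S₂ := fun hc =>
      h2Z.ne' (conj_eq_self_of_normal hZn hc)
    have c02 : ¬ SubgroupConj Z S₃ := by
      intro hc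
      have := conj_eq_self_of_normal hZn hc
      rcases h3 with ⟨h3', _⟩ | ⟨_, h3'⟩
      · exact h3'.ne' this
      · exact h3' this.ge
    have c12 : ¬ SubgroupConj S₂ S₃ := by
      rcases h3 with ⟨_, h3'⟩ | ⟨_, h3'⟩
      · exact h3'
      · exact fun hc => h3' (le_of_conj_of_le hZn h2Z.le hc)
    intro i j
    fin_cases i <;> fin_cases j <;> intro hc
    · rfl
    · exact absurd hc c01
    · exact absurd hc c02
    · exact absurd (subgroupConj_equiv.symm hc) c01
    · rfl
    · exact absurd hc c12
    · exact absurd (subgroupConj_equiv.symm hc) c02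
    · exact absurd (subgroupConj_equiv.symm hc) c12
    · rfl
  -- injectivity
  have hFinj : Function.Injective F := by
    rintro (x | i) (y | j) hxy
    · induction x using Quot.ind with | _ H =>
      induction y using Quot.ind with | _ K =>
      have hc : SubgroupConj (φ H).1 (φ K).1 := (mk_iff _ _).mp hxy
      have : (φ K).1 = (φ H).1 := conj_eq_self_of_normal (hφnormal H) hc
      have : H = K := Subtype.ext (hmapinj this.symm)
      rw [this]
    · induction x using Quot.ind with | _ H =>
      exact absurd ((mk_iff _ _).mp hxy) (hconjφt H j)
    · induction y using Quot.ind with | _ H =>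
      exact absurd (subgroupConj_equiv.symm ((mk_iff _ _).mp hxy)) (hconjφt H i)
    · rw [hconjtt i j ((mk_iff _ _).mp hxy)]
  -- conclude by cardinality
  have hfin1 : Finite (Subgroup ↥Z) := inferInstance
  have hfin2 : Finite TZ := inferInstance
  have hfin3 : Finite (Quot rZ) := inferInstance
  have hfin4 : Finite (Quot rG) := inferInstance
  have hcard : Nat.card (Quot rZ ⊕ Fin 3) = Nat.card (Quot rZ) + 3 := by
    simp [Nat.card_sum]
  have hle := Nat.card_le_card_of_injective F hFinj
  rw [hcard] at hle
  have h1 : DCount ↥Z = Nat.card (Quot rZ) := rfl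
  have h2 : DCount G = Nat.card (Quot rG) := rfl
  omega


lemma comap_lift {G : Type*} [Group G] (N : Subgroup G) [N.Normal]
    (K : Subgroup (G ⧸ N)) (hKb : K ≠ ⊥) (hKn : Subgroup.normalizer (K : Set (G ⧸ N)) ≠ K) :
    N < K.comap (QuotientGroup.mk' N) ∧
      Subgroup.normalizer ((K.comap (QuotientGroup.mk' N) : Subgroup G) : Set G) ≠ K.comap (QuotientGroup.mk' N) := by
  have hsurj := QuotientGroup.mk'_surjective N
  constructor
  · refine lt_of_le_of_ne ?_ ?_
    · intro x hx
      have h1 : (QuotientGroup.mk' N) x = 1 := (QuotientGroup.eq_one_iff x).mpr hx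
      rw [Subgroup.mem_comap, h1]
      exact K.one_mem
    · intro h
      apply hKb
      have h2 : K = (K.comap (QuotientGroup.mk' N)).map (QuotientGroup.mk' N) :=
        (Subgroup.map_comap_eq_self_of_surjective hsurj K).symm
      rw [← h] at h2
      rw [h2, eq_bot_iff]
      rintro x ⟨y, hy, rfl⟩
      simpa using (QuotientGroup.eq_one_iff y).mpr hy
  · intro heq
    have hsub : (Subgroup.normalizer (K : Set (G ⧸ N))).comap (QuotientGroup.mk' N) ≤
        Subgroup.normalizer ((K.comap (QuotientGroup.mk' N) : Subgroup G) : Set G) := by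
      intro g hg
      rw [Subgroup.mem_normalizer_iff]
      intro h
      have := Subgroup.mem_normalizer_iff.mp (Subgroup.mem_comap.mp hg)
        (QuotientGroup.mk' N h)
      simpa [Subgroup.mem_comap, map_mul] using this
    rw [heq] at hsub
    have hmap := Subgroup.map_mono (f := QuotientGroup.mk' N) hsub
    rw [Subgroup.map_comap_eq_self_of_surjective hsurj,
      Subgroup.map_comap_eq_self_of_surjective hsurj] at hmap
    exact hKn (le_antisymm hmap Subgroup.le_normalizer)

lemma exists_nsn {X : Type*} [Group X] [Finite X] (hX : ¬ IsCyclic X) :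
    ∃ K : Subgroup X, K ≠ ⊥ ∧ Subgroup.normalizer (K : Set X) ≠ K := by
  have hnt : Nontrivial X := by
    by_contra h
    rw [not_nontrivial_iff_subsingleton] at h
    exact hX (isCyclic_of_subsingleton)
  have hFX := Fintype.ofFinite X
  set p := (Fintype.card X).minFac with hpdef
  have hp : p.Prime := Nat.minFac_prime (Fintype.one_lt_card).ne'
  haveI : Fact p.Prime := ⟨hp⟩
  obtain ⟨P⟩ : Nonempty (Sylow p X) := inferInstance
  haveI : Nontrivial ↥(P : Subgroup X) := by
    rw [← Finite.one_lt_card_iff_nontrivial, Sylow.card_eq_multiplicity]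
    have hpos : 0 < (Nat.card X).factorization p := by
      refine Nat.Prime.factorization_pos_of_dvd hp Nat.card_pos.ne' ?_
      rw [Nat.card_eq_fintype_card]
      exact (Fintype.card X).minFac_dvd
    exact Nat.one_lt_pow hpos.ne' hp.one_lt
  -- an element of order p in the center of a Sylow subgroup
  obtain ⟨x, hxP, hxo, hcomm⟩ :
      ∃ x : X, x ∈ (P : Subgroup X) ∧ orderOf x = p ∧
        ∀ g ∈ (P : Subgroup X), g * x = x * g := by
    have hcnt : Nontrivial ↥(Subgroup.center ↥(P : Subgroup X)) :=
      P.isPGroup'.center_nontrivial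
    obtain ⟨u, hu⟩ := exists_ne (1 : ↥(Subgroup.center ↥(P : Subgroup X)))
    obtain ⟨k, hk⟩ := (IsPGroup.iff_orderOf.mp
      (P.isPGroup'.to_subgroup (Subgroup.center ↥(P : Subgroup X)))) u
    have hk0 : k ≠ 0 := by
      rintro rfl
      rw [pow_zero, orderOf_eq_one_iff] at hk
      exact hu hk
    have hpdvd : p ∣ orderOf u := by rw [hk]; exact dvd_pow_self p hk0
    obtain ⟨w, hw⟩ : ∃ w : ↥(Subgroup.center ↥(P : Subgroup X)), orderOf w = p :=
      ⟨u ^ (orderOf u / p), orderOf_pow_orderOf_div (orderOf_pos u).ne' hpdvd⟩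
    refine ⟨((w : ↥(P : Subgroup X)) : X), (w : ↥(P : Subgroup X)).2, ?_, ?_⟩
    · show orderOf ((P : Subgroup X).subtype
        ((Subgroup.center ↥(P : Subgroup X)).subtype w)) = p
      rw [orderOf_injective ((P : Subgroup X).subtype) (Subgroup.subtype_injective _),
        orderOf_injective ((Subgroup.center ↥(P : Subgroup X)).subtype)
          (Subgroup.subtype_injective _)]
      exact hw
    · intro g hg
      have := Subgroup.mem_center_iff.mp w.2 ⟨g, hg⟩
      exact congrArg Subtype.val this
  have hx1 : x ≠ 1 := by
    intro h
    rw [h, orderOf_one] at hxo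
    exact hp.one_lt.ne hxo
  by_cases hC : Subgroup.normalizer ((Subgroup.zpowers x : Subgroup X) : Set X) = Subgroup.zpowers x
  · -- Burnside transfer
    have hPC : (P : Subgroup X) ≤ Subgroup.zpowers x := by
      intro g hg
      rw [← hC, Subgroup.mem_normalizer_iff]
      have hconj : ∀ n : ℤ, g * x ^ n * g⁻¹ = x ^ n := by
        intro n
        have hcx : Commute g x := hcomm g hg
        rw [(hcx.zpow_right n).eq, mul_assoc, mul_inv_cancel, mul_one]
      intro h
      rw [Subgroup.mem_zpowers_iff, Subgroup.mem_zpowers_iff]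
      constructor
      · rintro ⟨n, rfl⟩
        exact ⟨n, (hconj n).symm⟩
      · rintro ⟨n, hn⟩
        refine ⟨n, ?_⟩
        have h3 : g⁻¹ * (g * x ^ n * g⁻¹) * g = g⁻¹ * x ^ n * g := by rw [hconj n]
        have h4 : g⁻¹ * (g * x ^ n * g⁻¹) * g = x ^ n := by group
        rw [← h4, h3, hn]
        group
    have hCP : Subgroup.zpowers x ≤ (P : Subgroup X) := (Subgroup.zpowers_le).mpr hxP
    have hPeq : (P : Subgroup X) = Subgroup.zpowers x := le_antisymm hPC hCP
    have hP : Subgroup.normalizer ((P : Subgroup X) : Set X) ≤ Subgroup.centralizer (P : Set X) := by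
      intro h hh
      rw [hPeq, hC] at hh
      rw [Subgroup.mem_centralizer_iff]
      intro s hs
      have hs' : s ∈ (P : Subgroup X) := hs
      rw [hPeq, Subgroup.mem_zpowers_iff] at hs'
      rw [Subgroup.mem_zpowers_iff] at hh
      obtain ⟨n, rfl⟩ := hh
      obtain ⟨m, rfl⟩ := hs'
      exact zpow_mul_comm x m n
    have hcomp : ((MonoidHom.transferSylow P hP).ker).IsComplement' (P : Subgroup X) :=
      MonoidHom.ker_transferSylow_isComplement' P hP
    have hKtop : (MonoidHom.transferSylow P hP).ker ≠ ⊤ := by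
      intro h
      rw [h] at hcomp
      have h2 := Subgroup.isComplement'_top_left.mp hcomp
      rw [h2] at hxP
      exact hx1 hxP
    have hKbot : (MonoidHom.transferSylow P hP).ker ≠ ⊥ := by
      intro h
      rw [h] at hcomp
      have hPtop : (P : Subgroup X) = ⊤ := Subgroup.isComplement'_bot_left.mp hcomp
      apply hX
      constructor
      refine ⟨x, fun a => ?_⟩
      have ha : a ∈ (P : Subgroup X) := by rw [hPtop]; trivial
      rw [hPeq] at ha
      exact ha
    refine ⟨(MonoidHom.transferSylow P hP).ker, hKbot, ?_⟩
    rw [Subgroup.normalizer_eq_top_iff.mpr (MonoidHom.normal_ker _)]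
    exact Ne.symm hKtop
  · refine ⟨Subgroup.zpowers x, ?_, hC⟩
    rw [Ne, Subgroup.zpowers_eq_bot]
    exact hx1


lemma mem_of_prime_pow_gen {X : Type*} [Group X] [Finite X] (H : Subgroup X)
    (hH : ∀ g : X, IsPrimePow (orderOf g) → g ∈ H) (g : X) : g ∈ H := by
  have key : ∀ n : ℕ, ∀ g : X, orderOf g = n → g ∈ H := by
    intro n
    induction n using Nat.strong_induction_on with
    | _ n ih =>
      intro g hg
      have hn0 : n ≠ 0 := by
        rw [← hg]
        exact (orderOf_pos g).ne'
      rcases eq_or_ne n 1 with h1 | h1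
      · rw [h1, orderOf_eq_one_iff] at hg
        · rw [hg]; exact H.one_mem
      by_cases hpp : IsPrimePow n
      · exact hH g (hg ▸ hpp)
      have hp : n.minFac.Prime := Nat.minFac_prime h1
      set q := n.minFac with hq
      set a := q ^ n.factorization q with ha
      set b := n / a with hb
      have hadvd : a ∣ n := Nat.ordProj_dvd n q
      have hab : a * b = n := Nat.mul_div_cancel' hadvd
      have hvpos : 0 < n.factorization q :=
        Nat.Prime.factorization_pos_of_dvd hp hn0 (Nat.minFac_dvd n)
      have ha1 : a ≠ 1 := (Nat.one_lt_pow hvpos.ne' hp.one_lt).ne'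
      have ha0 : a ≠ 0 := pow_ne_zero _ hp.pos.ne'
      have hb0 : b ≠ 0 := by
        intro h
        rw [h, mul_zero] at hab
        exact hn0 hab.symm
      have hb1 : b ≠ 1 := by
        intro h
        rw [h, mul_one] at hab
        exact hpp ⟨q, n.factorization q, hp.prime, hvpos, by rw [← ha, hab]⟩
      have hblt : b < n := by
        have : b ∣ n := Dvd.intro_left a hab
        refine lt_of_le_of_ne (Nat.le_of_dvd (Nat.pos_of_ne_zero hn0) this) ?_
        intro h
        rw [h] at hab
        have h2 : n * a = n * 1 := by rw [mul_one, mul_comm]; exact hab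
        exact ha1 (Nat.eq_of_mul_eq_mul_left (Nat.pos_of_ne_zero hn0) h2)
      have halt : a < n := by
        refine lt_of_le_of_ne (Nat.le_of_dvd (Nat.pos_of_ne_zero hn0) hadvd) ?_
        intro h
        rw [h] at hab
        have h2 : n * b = n * 1 := by rw [mul_one]; exact hab
        exact hb1 (Nat.eq_of_mul_eq_mul_left (Nat.pos_of_ne_zero hn0) h2)
      have hord : orderOf g ≠ 0 := by rw [hg]; exact hn0
      have hga : orderOf (g ^ a) = b := by
        have hbdvd : b ∣ orderOf g := by rw [hg]; exact Dvd.intro_left a hab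
        have hdiv : orderOf g / b = a := by
          rw [hg, ← hab, Nat.mul_div_cancel _ (Nat.pos_of_ne_zero hb0)]
        rw [← hdiv]
        exact orderOf_pow_orderOf_div hord hbdvd
      have hgb : orderOf (g ^ b) = a := by
        have hadvd' : a ∣ orderOf g := by rw [hg]; exact hadvd
        have hdiv : orderOf g / a = b := by rw [hg]
        rw [← hdiv]
        exact orderOf_pow_orderOf_div hord hadvd'
      have hma : g ^ a ∈ H := ih b hblt _ hga
      have hmb : g ^ b ∈ H := ih a halt _ hgb
      -- Bezout
      have hcop : Nat.Coprime a b := by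
        refine Nat.Coprime.pow_left _ ?_
        rw [Nat.Prime.coprime_iff_not_dvd hp]
        exact Nat.not_dvd_ordCompl hp hn0
      have hbez : (1 : ℤ) = a * Nat.gcdA a b + b * Nat.gcdB a b := by
        have := Nat.gcd_eq_gcd_ab a b
        rwa [hcop, Nat.cast_one] at this
      have hgeq : ((g ^ a) ^ (Nat.gcdA a b)) * ((g ^ b) ^ (Nat.gcdB a b)) = g := by
        rw [← zpow_natCast g a, ← zpow_natCast g b, ← zpow_mul, ← zpow_mul, ← zpow_add,
          ← hbez, zpow_one]
      rw [← hgeq]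
      exact H.mul_mem (H.zpow_mem hma _) (H.zpow_mem hmb _)
  exact key _ g rfl

lemma two_coatoms {X : Type*} [Group X] [Finite X] (hX : ¬ IsCyclic X)
    [Group.IsNilpotent X] :
    ∃ M₁ M₂ : Subgroup X, M₁ ≠ M₂ ∧ M₁ ≠ ⊥ ∧ M₂ ≠ ⊥ ∧ M₁ ≠ ⊤ ∧ M₂ ≠ ⊤ ∧
      M₁.Normal ∧ M₂.Normal := by
  have hnt : Nontrivial X := by
    by_contra h
    rw [not_nontrivial_iff_subsingleton] at h
    exact hX (isCyclic_of_subsingleton)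
  have hcyc : ∀ c : X, Subgroup.zpowers c ≠ ⊤ := by
    intro c h
    apply hX
    constructor
    refine ⟨c, fun a => ?_⟩
    exact Subgroup.mem_zpowers_iff.mp (by rw [h]; exact Subgroup.mem_top a)
  have hnotbot : ∀ M : Subgroup X, IsCoatom M → M ≠ ⊥ := by
    intro M hM h
    obtain ⟨c, hc⟩ := exists_ne (1 : X)
    refine hcyc c (hM.2 _ ?_)
    rw [h, bot_lt_iff_ne_bot, Ne, Subgroup.zpowers_eq_bot]
    exact hc
  have ncond := normalizerCondition_of_isNilpotent (G := X)
  have hnormal : ∀ M : Subgroup X, IsCoatom M → M.Normal := by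
    intro M hM
    rw [← Subgroup.normalizer_eq_top_iff]
    exact hM.2 _ (ncond M (lt_top_iff_ne_top.mpr hM.1))
  obtain ⟨M₁, hM₁⟩ : ∃ M, IsCoatom M := by
    rcases (eq_top_or_exists_le_coatom (⊥ : Subgroup X)) with h | ⟨M, hM, _⟩
    · obtain ⟨c, hc⟩ := exists_ne (1 : X)
      have hcmem : c ∈ (⊥ : Subgroup X) := by rw [h]; trivial
      exact absurd (Subgroup.mem_bot.mp hcmem) hc
    · exact ⟨M, hM⟩
  obtain ⟨b, hb⟩ : ∃ b : X, b ∉ M₁ := by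
    by_contra h
    push_neg at h
    exact hM₁.1 ((Subgroup.eq_top_iff' M₁).mpr h)
  obtain ⟨M₂, hM₂, hle⟩ : ∃ M, IsCoatom M ∧ Subgroup.zpowers b ≤ M := by
    rcases (eq_top_or_exists_le_coatom (Subgroup.zpowers b)) with h | ⟨M, hM, hle⟩
    · exact absurd h (hcyc b)
    · exact ⟨M, hM, hle⟩
  refine ⟨M₁, M₂, ?_, hnotbot _ hM₁, hnotbot _ hM₂, hM₁.1, hM₂.1,
    hnormal _ hM₁, hnormal _ hM₂⟩
  intro h
  exact hb (h ▸ hle (Subgroup.mem_zpowers b))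


end Stmt12Aux

theorem stmt12 (G : Type*) [Group G] [Finite G] (hna : ¬ ∀ a b : G, a * b = b * a)
    (hz : Subgroup.center G ≠ ⊥) :
    DCount ↥(Subgroup.center G) + 3 ≤ DCount G := by
  classical
  have hZt : Subgroup.center G ≠ ⊤ := by
    intro h
    apply hna
    intro a b
    have hb : b ∈ Subgroup.center G := by rw [h]; trivial
    exact Subgroup.mem_center_iff.mp hb a
  have hQnc : ¬ IsCyclic (G ⧸ Subgroup.center G) := by
    intro h
    apply hna
    intro a b
    exact commutative_of_cyclic_center_quotient
      (QuotientGroup.mk' (Subgroup.center G)) (by rw [QuotientGroup.ker_mk']) a b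
  by_cases hg : ∃ g : G, g ∉ Subgroup.center G ∧ IsPrimePow (orderOf g) ∧
      ¬ Subgroup.center G ≤ Subgroup.zpowers g
  · obtain ⟨g, hgZ, _, hZg⟩ := hg
    obtain ⟨K, hKb, hKn⟩ := Stmt12Aux.exists_nsn hQnc
    obtain ⟨h2Z, h2n⟩ := Stmt12Aux.comap_lift (Subgroup.center G) K hKb hKn
    have h3n : Subgroup.normalizer ((Subgroup.zpowers g : Subgroup G) : Set G) ≠ Subgroup.zpowers g := by
      intro h
      apply hZg
      rw [← h]
      intro z hzZ
      rw [Subgroup.mem_normalizer_iff]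
      intro u
      have hc : z * u * z⁻¹ = u := by
        have h2 := Subgroup.mem_center_iff.mp hzZ u
        rw [← h2, mul_assoc, mul_inv_cancel, mul_one]
      rw [hc]
    refine Stmt12Aux.finish hz hZt _ (Subgroup.zpowers g) (ne_bot_of_gt h2Z) h2n ?_ h3n h2Z
      (Or.inr ⟨?_, hZg⟩)
    · rw [Ne, Subgroup.zpowers_eq_bot]
      intro h
      rw [h] at hgZ
      exact hgZ (Subgroup.one_mem _)
    · intro hle
      exact hgZ (hle (Subgroup.mem_zpowers g))
  · push_neg at hg
    obtain ⟨g₀, hg₀Z, hg₀p⟩ : ∃ g₀ : G, g₀ ∉ Subgroup.center G ∧ IsPrimePow (orderOf g₀) := by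
      by_contra h
      push_neg at h
      apply hna
      intro a b
      have hall : ∀ x : G, x ∈ Subgroup.center G := by
        intro x
        refine Stmt12Aux.mem_of_prime_pow_gen _ (fun y hy => ?_) x
        by_contra hyZ
        exact h y hyZ hy
      exact Subgroup.mem_center_iff.mp (hall b) a
    obtain ⟨p, k, hpp, hk, hpk⟩ := hg₀p
    have hp : p.Prime := Nat.prime_iff.mpr hpp
    have hZg₀ := hg g₀ hg₀Z ⟨p, k, hpp, hk, hpk⟩
    obtain ⟨z₀, hz₀⟩ := Subgroup.ne_bot_iff_exists_ne_one.mp hz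
    have hz₀ne : (z₀ : G) ≠ 1 := fun h => hz₀ (by exact_mod_cast h)
    haveI : Fact p.Prime := ⟨hp⟩
    have hpg : IsPGroup p G := by
      rw [IsPGroup.iff_orderOf]
      intro h
      have hh0 : orderOf h ≠ 0 := (orderOf_pos h).ne'
      have hfact : ∀ s : ℕ, s.Prime → s ∣ orderOf h → s = p := by
        intro s hs hsd
        have hw : orderOf (h ^ (orderOf h / s)) = s := orderOf_pow_orderOf_div hh0 hsd
        set w := h ^ (orderOf h / s) with hwdef
        have hspow : IsPrimePow (orderOf w) := by rw [hw]; exact hs.isPrimePow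
        have hdvdp : ∀ t : G, t ∈ Subgroup.zpowers g₀ → orderOf t ∣ p ^ k := by
          intro t ht
          have h2 := orderOf_dvd_of_mem_zpowers ht
          rwa [← hpk] at h2
        by_cases hwZ : w ∈ Subgroup.center G
        · have hd := hdvdp w (hZg₀ hwZ)
          rw [hw] at hd
          exact (Nat.prime_dvd_prime_iff_eq hs hp).mp (hs.dvd_of_dvd_pow hd)
        · have hZw := hg w hwZ hspow
          have d1 : orderOf (z₀ : G) ∣ s := by
            have h2 := orderOf_dvd_of_mem_zpowers (hZw z₀.2)
            rwa [hw] at h2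
          have d2 : orderOf (z₀ : G) ∣ p ^ k := hdvdp _ (hZg₀ z₀.2)
          have hne1 : orderOf (z₀ : G) ≠ 1 := by
            rw [Ne, orderOf_eq_one_iff]
            exact hz₀ne
          have hos : orderOf (z₀ : G) = s :=
            (hs.eq_one_or_self_of_dvd _ d1).resolve_left hne1
          rw [hos] at d2
          exact (Nat.prime_dvd_prime_iff_eq hs hp).mp (hs.dvd_of_dvd_pow d2)
      exact ⟨_, Nat.eq_prime_pow_of_unique_prime_dvd hh0
        (fun {d} hd hdd => hfact d hd hdd)⟩
    haveI : Group.IsNilpotent G := hpg.isNilpotent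
    obtain ⟨M₁, M₂, hMne, hM₁b, hM₂b, hM₁t, hM₂t, hM₁n, hM₂n⟩ := Stmt12Aux.two_coatoms hQnc
    have l2 := Stmt12Aux.comap_lift (Subgroup.center G) M₁ hM₁b
      (by rw [Subgroup.normalizer_eq_top_iff.mpr hM₁n]; exact Ne.symm hM₁t)
    have l3 := Stmt12Aux.comap_lift (Subgroup.center G) M₂ hM₂b
      (by rw [Subgroup.normalizer_eq_top_iff.mpr hM₂n]; exact Ne.symm hM₂t)
    have hcomapinj := Subgroup.comap_injective (QuotientGroup.mk'_surjective (Subgroup.center G))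
    refine Stmt12Aux.finish hz hZt _ _ (ne_bot_of_gt l2.1) l2.2 (ne_bot_of_gt l3.1) l3.2 l2.1
      (Or.inl ⟨l3.1, ?_⟩)
    intro hc
    have hnorm : (M₁.comap (QuotientGroup.mk' (Subgroup.center G))).Normal := hM₁n.comap _
    have heq := Stmt12Aux.conj_eq_self_of_normal hnorm hc
    exact hMne (hcomapinj heq).symm
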